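/- Assume that for every nonzero f ∈ ℝ^M_{≥0} there exists i₀ with ⟨t_{i₀}/\hat{t}, f⟩ < 0. Then the set G = {f ∈ ℝ^M_{≥0} : ⟨t_i/\hat{t}, f⟩ ≥ −1 ∀i} is compact. -/

import Mathlib

/-- Under the no-risk-free-investment assumption, the admissible set G is compact. -/
theorem stmt5 (N M : ℕ) (T : Fin N → Fin M → ℝ) (that : Fin M → ℝ)
    (hthat : ∀ k, 0 < that k)
    (ha : ∀ f : Fin M → ℝ, (∀ k, 0 ≤ f k) → f ≠ 0 →
      ∃ i, ∑ k, (T i k / that k) * f k < 0) :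
    IsCompact {f : Fin M → ℝ |
      (∀ k, 0 ≤ f k) ∧ ∀ i, -1 ≤ ∑ k, (T i k / that k) * f k} := by
  rcases Nat.eq_zero_or_pos M with hM | hM
  · subst hM
    haveI : Subsingleton (Fin 0 → ℝ) := ⟨fun f g => funext fun k => k.elim0⟩
    exact (Set.toFinite _).isCompact
  set A : Fin N → (Fin M → ℝ) → ℝ := fun i f => ∑ k, (T i k / that k) * f k with hA_def
  have hA : ∀ i, Continuous (A i) := fun i =>
    continuous_finset_sum _ fun k _ => continuous_const.mul (continuous_apply k)
  have hAsmul : ∀ (i) (s : ℝ) (f : Fin M → ℝ), A i (s • f) = s * A i f := by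
    intro i s f
    simp only [hA_def, Pi.smul_apply, smul_eq_mul, Finset.mul_sum]
    exact Finset.sum_congr rfl fun k _ => by ring
  have hM0 : (0 : ℝ) < M := by exact_mod_cast hM
  set f₀ : Fin M → ℝ := fun _ => (M : ℝ)⁻¹ with hf₀
  have hf₀nn : ∀ k, 0 ≤ f₀ k := fun k => by positivity
  have hf₀sum : ∑ k, f₀ k = 1 := by
    simp [hf₀, Finset.sum_const, Finset.card_univ]
    field_simp
  have hf₀ne : f₀ ≠ 0 := by
    intro h
    have h2 := congrFun h ⟨0, hM⟩
    simp only [hf₀, Pi.zero_apply] at h2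
    exact inv_ne_zero hM0.ne' h2
  haveI hN : Nonempty (Fin N) := ⟨(ha f₀ hf₀nn hf₀ne).choose⟩
  -- helper: norm bound from sum bound for nonneg vectors
  have hbound : ∀ (f : Fin M → ℝ), (∀ k, 0 ≤ f k) → ∀ C : ℝ, (∑ k, f k) ≤ C → ‖f‖ ≤ C := by
    intro f hf C hC
    rw [pi_norm_le_iff_of_nonneg (le_trans (Finset.sum_nonneg fun k _ => hf k) hC)]
    intro k
    rw [Real.norm_eq_abs, abs_of_nonneg (hf k)]
    exact le_trans (Finset.single_le_sum (fun j _ => hf j) (Finset.mem_univ k)) hC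
  -- the simplex S
  set S : Set (Fin M → ℝ) := {f | (∀ k, 0 ≤ f k) ∧ ∑ k, f k = 1} with hS
  have hSne : S.Nonempty := ⟨f₀, hf₀nn, hf₀sum⟩
  have hSclosed : IsClosed S := by
    rw [hS, Set.setOf_and]
    apply IsClosed.inter
    · rw [Set.setOf_forall]
      exact isClosed_iInter fun k => isClosed_le continuous_const (continuous_apply k)
    · exact isClosed_eq (continuous_finset_sum _ fun k _ => continuous_apply k) continuous_const
  have hScompact : IsCompact S := by
    apply Metric.isCompact_of_isClosed_isBounded hSclosed
    apply (Metric.isBounded_closedBall (x := 0) (r := 1)).subset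
    intro f hf
    rw [Metric.mem_closedBall, dist_zero_right]
    exact hbound f hf.1 1 (le_of_eq hf.2)
  -- the min function
  set φ : (Fin M → ℝ) → ℝ := fun f => Finset.univ.inf' Finset.univ_nonempty (fun i => A i f)
    with hφ_def
  have hφcont : Continuous φ :=
    Continuous.finset_inf'_apply Finset.univ_nonempty fun i _ => hA i
  obtain ⟨g₀, hg₀S, hg₀max⟩ := hScompact.exists_isMaxOn hSne hφcont.continuousOn
  set c : ℝ := φ g₀ with hc_def
  have hg₀ne : g₀ ≠ 0 := by
    intro h
    have h2 := hg₀S.2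
    rw [h] at h2
    simp at h2
  have hc : c < 0 := by
    obtain ⟨i, hi⟩ := ha g₀ hg₀S.1 hg₀ne
    exact lt_of_le_of_lt (Finset.inf'_le _ (Finset.mem_univ i)) hi
  -- the bound on the sum for elements of G
  have hCpos : (0 : ℝ) < (-c)⁻¹ := inv_pos.mpr (neg_pos.mpr hc)
  have hGsum : ∀ f : Fin M → ℝ, (∀ k, 0 ≤ f k) → (∀ i, -1 ≤ A i f) →
      (∑ k, f k) ≤ (-c)⁻¹ := by
    intro f hfnn hfA
    set s : ℝ := ∑ k, f k with hs_def
    have hs0 : 0 ≤ s := Finset.sum_nonneg fun k _ => hfnn k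
    rcases eq_or_lt_of_le hs0 with hs | hs
    · exact le_of_lt (hs ▸ hCpos)
    · set g : Fin M → ℝ := s⁻¹ • f with hg_def
      have hgS : g ∈ S := by
        constructor
        · intro k
          exact mul_nonneg (inv_nonneg.mpr hs0) (hfnn k)
        · simp only [hg_def, Pi.smul_apply, smul_eq_mul, ← Finset.mul_sum]
          field_simp
          exact hs_def.symm
      have hφg : φ g ≤ c := hg₀max hgS
      obtain ⟨i, _, hieq⟩ := Finset.exists_mem_eq_inf' Finset.univ_nonempty (fun i => A i g)
      have hAig : A i g ≤ c := hieq ▸ hφg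
      have hAif : A i f = s * A i g := by
        have : f = s • g := by
          rw [hg_def, smul_smul, mul_inv_cancel₀ hs.ne', one_smul]
        rw [this, hAsmul]
      have h1 : -1 ≤ s * A i g := hAif ▸ hfA i
      have h2 : s * A i g ≤ s * c := mul_le_mul_of_nonneg_left hAig hs0
      have h3 : s * (-c) ≤ 1 := by nlinarith
      rw [inv_eq_one_div, le_div_iff₀ (neg_pos.mpr hc)]
      exact h3
  -- conclude
  apply Metric.isCompact_of_isClosed_isBounded
  · rw [Set.setOf_and]
    apply IsClosed.inter
    · rw [Set.setOf_forall]
      exact isClosed_iInter fun k => isClosed_le continuous_const (continuous_apply k)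
    · rw [Set.setOf_forall]
      exact isClosed_iInter fun i => isClosed_le continuous_const (hA i)
  · apply (Metric.isBounded_closedBall (x := 0) (r := (-c)⁻¹)).subset
    intro f hf
    rw [Metric.mem_closedBall, dist_zero_right]
    exact hbound f hf.1 _ (hGsum f hf.1 hf.2)
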